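/- For every fixed integer k ≥ 1 there exist a constant c > 0 and an integer n₀ such that for all n ≥ n₀, log S_k(n) ≥ c · n · log n, where S_k(n) is the number of k-degenerate simple graphs on the labeled vertex set Fin n. (Lower-bound half of Theorem 1.) -/

import Mathlib

open scoped Nat


/-- A simple graph `G` is `k`-degenerate if every nonempty induced subgraph has a
vertex of degree at most `k`: for every nonempty finite set `S` of vertices there is
a vertex `v ∈ S` adjacent to at most `k` other vertices of `S`. -/
def IsKDegenerate {V : Type*} (k : ℕ) (G : SimpleGraph V) : Prop :=
  ∀ S : Finset V, S.Nonempty → ∃ v ∈ S, {w ∈ (S : Set V) | G.Adj v w}.ncard ≤ k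

/-- `numKDegenerate k n` (denoted `S_k(n)` in the paper) is the number of
`k`-degenerate simple graphs on the labeled vertex set `Fin n`. -/
noncomputable def numKDegenerate (k n : ℕ) : ℕ :=
  Nat.card {G : SimpleGraph (Fin n) // IsKDegenerate k G}

namespace KDegAux

variable {n : ℕ}

/-- The parent of `i` under `f`, as an element of `Fin n`. -/
def par (f : ∀ i : Fin n, Fin (i + 1)) (i : Fin n) : Fin n :=
  Fin.castLE i.isLt (f i)

lemma par_le (f : ∀ i : Fin n, Fin (i + 1)) (i : Fin n) : (par f i : ℕ) ≤ i := by
  have := (f i).isLt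
  simp only [par, Fin.coe_castLE]
  omega

/-- The "forest" graph associated to a parent function. -/
def gr (f : ∀ i : Fin n, Fin (i + 1)) : SimpleGraph (Fin n) :=
  SimpleGraph.fromRel (fun i j => j = par f i)

lemma gr_adj (f : ∀ i : Fin n, Fin (i + 1)) (a b : Fin n) :
    (gr f).Adj a b ↔ a ≠ b ∧ (b = par f a ∨ a = par f b) := by
  simp [gr, SimpleGraph.fromRel_adj, eq_comm]

lemma par_eq_of_ne (f f' : ∀ i : Fin n, Fin (i + 1)) (hg : gr f = gr f')
    (i : Fin n) (h : par f i ≠ i) : par f i = par f' i := by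
  have hlt : (par f i : ℕ) < i := lt_of_le_of_ne (par_le f i) (fun hc => h (Fin.ext hc))
  have hadj : (gr f).Adj i (par f i) := by
    rw [gr_adj]
    exact ⟨fun hc => h hc.symm, Or.inl rfl⟩
  rw [hg, gr_adj] at hadj
  rcases hadj.2 with h1 | h2
  · exact h1
  · exfalso
    have := par_le f' (par f i)
    rw [← h2] at this
    omega

lemma injective_gr : Function.Injective (gr (n := n)) := by
  intro f f' hg
  funext i
  have key : par f i = par f' i := by
    by_cases h1 : par f i = i
    · by_cases h2 : par f' i = i
      · rw [h1, h2]
      · exact ((par_eq_of_ne f' f hg.symm i h2).symm)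
    · exact par_eq_of_ne f f' hg i h1
  have : Fin.castLE i.isLt (f i) = Fin.castLE i.isLt (f' i) := key
  exact Fin.castLE_injective _ this

lemma gr_degenerate (k : ℕ) (hk : 1 ≤ k) (f : ∀ i : Fin n, Fin (i + 1)) :
    IsKDegenerate k (gr f) := by
  intro S hS
  refine ⟨S.max' hS, S.max'_mem hS, ?_⟩
  set v := S.max' hS with hv
  have hsub : {w ∈ (S : Set (Fin n)) | (gr f).Adj v w} ⊆ {par f v} := by
    rintro w ⟨hwS, hadj⟩
    rw [gr_adj] at hadj
    rcases hadj.2 with h1 | h2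
    · exact h1
    · exfalso
      have hle : w ≤ v := S.le_max' w hwS
      have := par_le f w
      rw [← h2] at this
      have : (v : ℕ) = w := le_antisymm this hle
      exact hadj.1 (Fin.ext this)
  calc {w ∈ (S : Set (Fin n)) | (gr f).Adj v w}.ncard
      ≤ ({par f v} : Set (Fin n)).ncard :=
        Set.ncard_le_ncard hsub (Set.finite_singleton _)
    _ = 1 := Set.ncard_singleton _
    _ ≤ k := hk

lemma factorial_le_numKDegenerate (k : ℕ) (hk : 1 ≤ k) (n : ℕ) :
    n ! ≤ numKDegenerate k n := by
  have hcard : Nat.card (∀ i : Fin n, Fin (i + 1)) = n ! := by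
    rw [Nat.card_pi]
    simp only [Nat.card_eq_fintype_card, Fintype.card_fin]
    rw [← Finset.prod_range_add_one_eq_factorial]
    exact Fin.prod_univ_eq_prod_range (fun i => i + 1) n
  rw [← hcard, numKDegenerate]
  exact Nat.card_le_card_of_injective
    (fun f => (⟨gr f, gr_degenerate k hk f⟩ : {G : SimpleGraph (Fin n) // IsKDegenerate k G}))
    (fun f f' h => injective_gr (congrArg Subtype.val h))

lemma pow_half_le_factorial (n : ℕ) : (n / 2) ^ (n / 2) ≤ n ! := by
  set m := n / 2 with hm
  have h1 : m ^ m ≤ m ! * (m + 1) ^ (n - m) := by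
    calc m ^ m ≤ (m + 1) ^ (n - m) := by
          calc m ^ m ≤ (m + 1) ^ m := Nat.pow_le_pow_left (Nat.le_succ m) m
            _ ≤ (m + 1) ^ (n - m) := Nat.pow_le_pow_right (Nat.succ_pos m) (by omega)
      _ ≤ m ! * (m + 1) ^ (n - m) := Nat.le_mul_of_pos_left _ (Nat.factorial_pos m)
  calc m ^ m ≤ m ! * (m + 1) ^ (n - m) := h1
    _ ≤ (m + (n - m))! := Nat.factorial_mul_pow_le_factorial
    _ = n ! := by congr 1; omega

end KDegAux

/-- Lower-bound half of Theorem 1: for every fixed `k ≥ 1` there are `c > 0` and `n₀`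
such that `log S_k(n) ≥ c · n · log n` for all `n ≥ n₀`. -/
theorem log_numKDegenerate_lower_bound (k : ℕ) (hk : 1 ≤ k) :
    ∃ c : ℝ, 0 < c ∧ ∃ n₀ : ℕ, ∀ n : ℕ, n₀ ≤ n →
      c * n * Real.log n ≤ Real.log (numKDegenerate k n) := by
  refine ⟨1/8, by norm_num, 16, fun n hn => ?_⟩
  set m := n / 2 with hm
  have hm8 : 8 ≤ m := by omega
  have h4m : (n : ℝ) ≤ 4 * m := by
    have : n ≤ 4 * m := by omega
    exact_mod_cast this
  have hmpos : (0 : ℝ) < m := by positivity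
  have hnpos : (0 : ℝ) < n := by positivity
  -- log n ≥ log 16 = 2 log 4
  have hlog16 : Real.log 16 ≤ Real.log n := by
    apply Real.log_le_log (by norm_num)
    exact_mod_cast hn
  have hlog4 : 2 * Real.log 4 = Real.log 16 := by
    rw [show (16 : ℝ) = 4 ^ 2 by norm_num, Real.log_pow]
    push_cast; ring
  have hlogn_nonneg : (0 : ℝ) ≤ Real.log n := by
    have : (0:ℝ) ≤ Real.log 16 := Real.log_nonneg (by norm_num)
    linarith
  -- log m ≥ (1/2) log n
  have hlogm : Real.log n / 2 ≤ Real.log m := by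
    have h1 : Real.log n - Real.log 4 ≤ Real.log m := by
      rw [← Real.log_div (ne_of_gt hnpos) (by norm_num)]
      apply Real.log_le_log (by positivity)
      rw [div_le_iff₀ (by norm_num)]
      linarith
    have h2 : (0:ℝ) ≤ Real.log 4 := Real.log_nonneg (by norm_num)
    nlinarith
  -- n/4 ≤ m
  have hm4 : (n : ℝ) / 4 ≤ m := by linarith
  -- chain
  have key : (1/8 : ℝ) * n * Real.log n ≤ (m : ℝ) * Real.log m := by
    have : (1/8 : ℝ) * n * Real.log n = ((n:ℝ)/4) * (Real.log n / 2) := by ring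
    rw [this]
    apply mul_le_mul hm4 hlogm (by linarith) (le_of_lt hmpos)
  have hfact : (m : ℕ) ^ m ≤ n ! := KDegAux.pow_half_le_factorial n
  have hS : n ! ≤ numKDegenerate k n := KDegAux.factorial_le_numKDegenerate k hk n
  have hle : (m : ℕ) ^ m ≤ numKDegenerate k n := le_trans hfact hS
  have hlogS : (m : ℝ) * Real.log m ≤ Real.log (numKDegenerate k n) := by
    have h1 : Real.log ((m : ℕ) ^ m : ℕ) ≤ Real.log (numKDegenerate k n) := by
      apply Real.log_le_log (by positivity) (by exact_mod_cast hle)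
    rw [Nat.cast_pow, Real.log_pow] at h1
    exact le_trans (le_of_eq (by push_cast; ring)) h1
  linarith
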